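/- In the major-minor mean-field model, the pair (Z_t, X^0_t) is a controlled Markov process with controls (γ_t, U^0_t): for any realization, P(Z_{t+1}=z, X^0_{t+1}=x^0 | Z_{1:t}, X^0_{1:t}, γ_{1:t}, U^0_{1:t}) = P(Z_{t+1}=z, X^0_{t+1}=x^0 | Z_t, X^0_t, γ_t, U^0_t). -/

import Mathlib

open scoped ENNReal

set_option synthInstance.maxSize 400

noncomputable section

/-- Empirical distribution (mean field) of a tuple of `n` points in a finite set `X`. -/
def emp {X : Type*} [Fintype X] [DecidableEq X] {n : ℕ} (x : Fin n → X) : X → ℝ :=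
  fun a => ((Finset.univ.filter fun i => x i = a).card : ℝ) / n

variable {X X0 U U0 W W0 : Type*}

/-- Closed-loop joint (major, minor) state process of the major-minor mean-field system
on the canonical sample space (initial states and noises):
`X⁰_{t+1} = f⁰(Z_t, X⁰_t, U⁰_t, W⁰_t)` and
`Xⁱ_{t+1} = f(Z_t, X⁰_t, Xⁱ_t, γ_t(Xⁱ_t), Wⁱ_t)`, where the prescription `γ_t` and the
major action `U⁰_t` are functions of `(Z_{0:t}, X⁰_{0:t})`. -/
def mmState [Fintype X] [DecidableEq X] [Inhabited W] [Inhabited W0] {n T : ℕ}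
    (f0 : (X → ℝ) → X0 → U0 → W0 → X0)
    (f : (X → ℝ) → X0 → X → U → W → X)
    (ψ0 : (t : ℕ) → (Fin (t + 1) → (X → ℝ)) → (Fin (t + 1) → X0) → U0)
    (ψ : (t : ℕ) → (Fin (t + 1) → (X → ℝ)) → (Fin (t + 1) → X0) → X → U)
    (ω : X0 × (Fin n → X) × (Fin T → W0) × (Fin T → Fin n → W)) :
    ℕ → X0 × (Fin n → X)
  | 0 => (ω.1, ω.2.1)
  | t + 1 =>
      (f0 (emp (mmState f0 f ψ0 ψ ω t).2) (mmState f0 f ψ0 ψ ω t).1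
        (ψ0 t (fun s : Fin (t + 1) => emp (mmState f0 f ψ0 ψ ω s).2)
          (fun s : Fin (t + 1) => (mmState f0 f ψ0 ψ ω s).1))
        (if h : t < T then ω.2.2.1 ⟨t, h⟩ else default),
      fun i =>
        f (emp (mmState f0 f ψ0 ψ ω t).2) (mmState f0 f ψ0 ψ ω t).1
          ((mmState f0 f ψ0 ψ ω t).2 i)
          (ψ t (fun s : Fin (t + 1) => emp (mmState f0 f ψ0 ψ ω s).2)
            (fun s : Fin (t + 1) => (mmState f0 f ψ0 ψ ω s).1)
            ((mmState f0 f ψ0 ψ ω t).2 i))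
          (if h : t < T then ω.2.2.2 ⟨t, h⟩ i else default))
  termination_by t => t
  decreasing_by all_goals first | exact s.isLt | omega


section MMAux

open Finset

lemma emp_perm {X : Type*} [Fintype X] [DecidableEq X] {n : ℕ} (x : Fin n → X)
    (σ : Equiv.Perm (Fin n)) : emp (fun i => x (σ i)) = emp x := by
  funext a
  unfold emp
  congr 2
  exact Finset.card_bij' (fun i _ => σ i) (fun j _ => σ.symm j)
    (by simp_all) (by simp_all) (by simp) (by simp)

lemma exists_perm_of_emp_eq {X : Type*} [Fintype X] [DecidableEq X] {n : ℕ} (hn : 1 ≤ n)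
    {x x' : Fin n → X} (h : emp x = emp x') :
    ∃ σ : Equiv.Perm (Fin n), ∀ i, x (σ i) = x' i := by
  have hc : ∀ a, Fintype.card {i // x' i = a} = Fintype.card {i // x i = a} := by
    intro a
    have h1 := congrFun h a
    unfold emp at h1
    have hn' : (n : ℝ) ≠ 0 := by positivity
    rw [div_eq_div_iff (by positivity) (by positivity)] at h1
    have h2 : ((Finset.univ.filter fun i => x i = a).card : ℝ)
        = ((Finset.univ.filter fun i => x' i = a).card : ℝ) :=
      mul_right_cancel₀ hn' h1
    have h3 : (Finset.univ.filter fun i => x i = a).card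
        = (Finset.univ.filter fun i => x' i = a).card := by exact_mod_cast h2
    simp [Fintype.card_subtype, h3]
  exact ⟨Equiv.ofFiberEquiv (f := x') (g := x) (fun a => Fintype.equivOfCardEq (hc a)),
    fun i => Equiv.ofFiberEquiv_map _ i⟩

open Classical in
lemma sum_emp_invariant {X W : Type*} [Fintype X] [DecidableEq X] [Fintype W] {n : ℕ}
    (hn : 1 ≤ n) (ν : W → ℝ≥0∞) (g : X → W → X) (znext : X → ℝ)
    {xt xr : Fin n → X} (h : emp xt = emp xr) :
    (∑ b : Fin n → W, if emp (fun i => g (xt i) (b i)) = znext then ∏ i, ν (b i) else 0)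
      = ∑ b : Fin n → W, if emp (fun i => g (xr i) (b i)) = znext then ∏ i, ν (b i) else 0 := by
  obtain ⟨σ, hσ⟩ := exists_perm_of_emp_eq hn h.symm
  rw [← Equiv.sum_comp (Equiv.arrowCongr σ (Equiv.refl W))
    (fun b => if emp (fun i => g (xr i) (b i)) = znext then ∏ i, ν (b i) else 0)]
  refine Finset.sum_congr rfl fun b _ => ?_
  have hb : ∀ i, (Equiv.arrowCongr σ (Equiv.refl W)) b i = b (σ.symm i) := by
    intro i; simp [Equiv.arrowCongr]
  have h1 : (fun i => g (xr i) ((Equiv.arrowCongr σ (Equiv.refl W)) b i))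
      = fun i => (fun j => g (xt j) (b j)) (σ.symm i) := by
    funext i
    simp only [hb]
    rw [← hσ (σ.symm i), Equiv.apply_symm_apply]
  have h2 : (∏ i, ν ((Equiv.arrowCongr σ (Equiv.refl W)) b i)) = ∏ i, ν (b i) := by
    simp only [hb]
    exact Equiv.prod_comp σ.symm (fun i => ν (b i))
  rw [h1, h2, emp_perm (fun j => g (xt j) (b j)) σ.symm]

lemma prod_split {M : Type*} [CommMonoid M] {T : ℕ} (τ : Fin T) (h : Fin T → M) :
    ∏ j, h j = h τ * ∏ j : {j // j ≠ τ}, h (j : Fin T) := by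
  rw [← Finset.mul_prod_erase Finset.univ h (Finset.mem_univ τ)]
  congr 1
  exact Finset.prod_subtype (Finset.univ.erase τ) (fun j => by simp [Finset.mem_erase]) h

variable {X X0 U U0 W W0 : Type*}

lemma mmState_congr [Fintype X] [DecidableEq X] [Inhabited W] [Inhabited W0] {n T : ℕ}
    (f0 : (X → ℝ) → X0 → U0 → W0 → X0)
    (f : (X → ℝ) → X0 → X → U → W → X)
    (ψ0 : (t : ℕ) → (Fin (t + 1) → (X → ℝ)) → (Fin (t + 1) → X0) → U0)
    (ψ : (t : ℕ) → (Fin (t + 1) → (X → ℝ)) → (Fin (t + 1) → X0) → X → U)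
    {t : ℕ} {ω ω' : X0 × (Fin n → X) × (Fin T → W0) × (Fin T → Fin n → W)}
    (h1 : ω.1 = ω'.1) (h2 : ω.2.1 = ω'.2.1)
    (h3 : ∀ j : Fin T, (j : ℕ) < t → ω.2.2.1 j = ω'.2.2.1 j)
    (h4 : ∀ j : Fin T, (j : ℕ) < t → ω.2.2.2 j = ω'.2.2.2 j) :
    ∀ s ≤ t, mmState f0 f ψ0 ψ ω s = mmState f0 f ψ0 ψ ω' s := by
  intro s
  induction s using Nat.strong_induction_on with
  | _ s IH =>
    intro hs
    match s with
    | 0 => simp only [mmState, h1, h2]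
    | (r + 1) =>
      have hr : ∀ q ≤ r, mmState f0 f ψ0 ψ ω q = mmState f0 f ψ0 ψ ω' q :=
        fun q hq => IH q (by omega) (by omega)
      have e1 : (fun p : Fin (r + 1) => emp (mmState f0 f ψ0 ψ ω (p : ℕ)).2)
          = fun p : Fin (r + 1) => emp (mmState f0 f ψ0 ψ ω' (p : ℕ)).2 := by
        funext p
        rw [hr (p : ℕ) (Nat.lt_succ_iff.mp p.isLt)]
      have e2 : (fun p : Fin (r + 1) => (mmState f0 f ψ0 ψ ω (p : ℕ)).1)
          = fun p : Fin (r + 1) => (mmState f0 f ψ0 ψ ω' (p : ℕ)).1 := by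
        funext p
        rw [hr (p : ℕ) (Nat.lt_succ_iff.mp p.isLt)]
      have e3 : (if h : r < T then ω.2.2.1 ⟨r, h⟩ else default)
          = (if h : r < T then ω'.2.2.1 ⟨r, h⟩ else default) := by
        split_ifs with h
        · exact h3 ⟨r, h⟩ (Nat.lt_of_succ_le hs)
        · rfl
      have e4 : ∀ i : Fin n, (if h : r < T then ω.2.2.2 ⟨r, h⟩ i else default)
          = (if h : r < T then ω'.2.2.2 ⟨r, h⟩ i else default) := by
        intro i
        split_ifs with h
        · rw [h4 ⟨r, h⟩ (Nat.lt_of_succ_le hs)]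
        · rfl
      simp only [mmState]
      rw [hr r le_rfl, e1, e2, e3]
      simp only [e4]

lemma mmState_succ [Fintype X] [DecidableEq X] [Inhabited W] [Inhabited W0] {n T : ℕ}
    (f0 : (X → ℝ) → X0 → U0 → W0 → X0)
    (f : (X → ℝ) → X0 → X → U → W → X)
    (ψ0 : (t : ℕ) → (Fin (t + 1) → (X → ℝ)) → (Fin (t + 1) → X0) → U0)
    (ψ : (t : ℕ) → (Fin (t + 1) → (X → ℝ)) → (Fin (t + 1) → X0) → X → U)
    (ω : X0 × (Fin n → X) × (Fin T → W0) × (Fin T → Fin n → W))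
    {t : ℕ} (ht : t < T) :
    mmState f0 f ψ0 ψ ω (t + 1) =
      (f0 (emp (mmState f0 f ψ0 ψ ω t).2) (mmState f0 f ψ0 ψ ω t).1
        (ψ0 t (fun s : Fin (t + 1) => emp (mmState f0 f ψ0 ψ ω (s : ℕ)).2)
          (fun s : Fin (t + 1) => (mmState f0 f ψ0 ψ ω (s : ℕ)).1))
        (ω.2.2.1 ⟨t, ht⟩),
      fun i =>
        f (emp (mmState f0 f ψ0 ψ ω t).2) (mmState f0 f ψ0 ψ ω t).1
          ((mmState f0 f ψ0 ψ ω t).2 i)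
          (ψ t (fun s : Fin (t + 1) => emp (mmState f0 f ψ0 ψ ω (s : ℕ)).2)
            (fun s : Fin (t + 1) => (mmState f0 f ψ0 ψ ω (s : ℕ)).1)
            ((mmState f0 f ψ0 ψ ω t).2 i))
          (ω.2.2.2 ⟨t, ht⟩ i)) := by
  simp only [mmState, dif_pos ht]

open Classical in
lemma key_sum
    [Fintype X] [DecidableEq X] [Fintype X0] [DecidableEq X0]
    [Fintype U] [DecidableEq U] [Fintype U0] [DecidableEq U0]
    [Fintype W] [DecidableEq W] [Inhabited W]
    [Fintype W0] [DecidableEq W0] [Inhabited W0] {n T : ℕ} (hn : 1 ≤ n)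
    (f0 : (X → ℝ) → X0 → U0 → W0 → X0)
    (f : (X → ℝ) → X0 → X → U → W → X)
    (ψ0 : (t : ℕ) → (Fin (t + 1) → (X → ℝ)) → (Fin (t + 1) → X0) → U0)
    (ψ : (t : ℕ) → (Fin (t + 1) → (X → ℝ)) → (Fin (t + 1) → X0) → X → U)
    (ρ0 : X0 → ℝ≥0∞) (ρ : X → ℝ≥0∞) (ν0 : W0 → ℝ≥0∞) (ν : W → ℝ≥0∞)
    (hν0 : ∑ w : W0, ν0 w = 1) (hν : ∑ w : W, ν w = 1)
    (mass : (X0 × (Fin n → X) × (Fin T → W0) × (Fin T → Fin n → W)) → ℝ≥0∞)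
    (hmass : ∀ ω, mass ω = ρ0 ω.1 * (∏ i, ρ (ω.2.1 i)) *
      (∏ t, ν0 (ω.2.2.1 t)) * ∏ t, ∏ i, ν (ω.2.2.2 t i))
    {t : ℕ} (ht : t < T)
    (z : X → ℝ) (x0c : X0) (γc : X → U) (u0c : U0) (znext : X → ℝ) (x0next : X0)
    (S C : Finset (X0 × (Fin n → X) × (Fin T → W0) × (Fin T → Fin n → W)))
    (hS : ∀ ω ω', (∀ s ≤ t, mmState f0 f ψ0 ψ ω s = mmState f0 f ψ0 ψ ω' s) →
      (ω ∈ S ↔ ω' ∈ S))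
    (hSval : ∀ ω ∈ S, emp (mmState f0 f ψ0 ψ ω t).2 = z ∧
      (mmState f0 f ψ0 ψ ω t).1 = x0c ∧
      ψ t (fun r : Fin (t + 1) => emp (mmState f0 f ψ0 ψ ω (r : ℕ)).2)
        (fun r : Fin (t + 1) => (mmState f0 f ψ0 ψ ω (r : ℕ)).1) = γc ∧
      ψ0 t (fun r : Fin (t + 1) => emp (mmState f0 f ψ0 ψ ω (r : ℕ)).2)
        (fun r : Fin (t + 1) => (mmState f0 f ψ0 ψ ω (r : ℕ)).1) = u0c)
    (hC : ∀ ω, ω ∈ C ↔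
      emp (mmState f0 f ψ0 ψ ω (t + 1)).2 = znext ∧
      (mmState f0 f ψ0 ψ ω (t + 1)).1 = x0next)
    (xr : Fin n → X) (hxr : emp xr = z) :
    ∑ ω ∈ S ∩ C, mass ω = (∑ ω ∈ S, mass ω) *
      ((∑ a : W0, if f0 z x0c u0c a = x0next then ν0 a else 0) *
       (∑ b : Fin n → W, if emp (fun i => f z x0c (xr i) (γc (xr i)) (b i)) = znext
          then ∏ i, ν (b i) else 0)) := by
  classical
  set K : ℝ≥0∞ := (∑ a : W0, if f0 z x0c u0c a = x0next then ν0 a else 0) *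
       (∑ b : Fin n → W, if emp (fun i => f z x0c (xr i) (γc (xr i)) (b i)) = znext
          then ∏ i, ν (b i) else 0) with hK
  set Base : X0 → (Fin n → X) → ({j : Fin T // j ≠ ⟨t, ht⟩} → W0) →
      ({j : Fin T // j ≠ ⟨t, ht⟩} → (Fin n → W)) → W0 → (Fin n → W) →
      (X0 × (Fin n → X) × (Fin T → W0) × (Fin T → Fin n → W)) :=
    fun x0 xs r0 r1 a b => (x0, xs, (Equiv.funSplitAt ⟨t, ht⟩ W0).symm (a, r0),
      (Equiv.funSplitAt ⟨t, ht⟩ (Fin n → W)).symm (b, r1)) with hBase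
  have hBase1 : ∀ x0 xs r0 r1 a b, (Base x0 xs r0 r1 a b).2.2.1 ⟨t, ht⟩ = a := by
    intro x0 xs r0 r1 a b
    simp [hBase, Equiv.funSplitAt_symm_apply]
  have hBase1' : ∀ x0 xs r0 r1 a b (j : {j : Fin T // j ≠ ⟨t, ht⟩}),
      (Base x0 xs r0 r1 a b).2.2.1 (j : Fin T) = r0 j := by
    intro x0 xs r0 r1 a b j
    simp [hBase, Equiv.funSplitAt_symm_apply, j.2]
  have hBase2 : ∀ x0 xs r0 r1 a b, (Base x0 xs r0 r1 a b).2.2.2 ⟨t, ht⟩ = b := by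
    intro x0 xs r0 r1 a b
    simp [hBase, Equiv.funSplitAt_symm_apply]
  have hBase2' : ∀ x0 xs r0 r1 a b (j : {j : Fin T // j ≠ ⟨t, ht⟩}),
      (Base x0 xs r0 r1 a b).2.2.2 (j : Fin T) = r1 j := by
    intro x0 xs r0 r1 a b j
    simp [hBase, Equiv.funSplitAt_symm_apply, j.2]
  -- reindexing of sums over the sample space
  have reindex : ∀ F : (X0 × (Fin n → X) × (Fin T → W0) × (Fin T → Fin n → W)) → ℝ≥0∞,
      ∑ ω, F ω = ∑ x0, ∑ xs, ∑ r0 : {j : Fin T // j ≠ ⟨t, ht⟩} → W0,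
        ∑ r1 : {j : Fin T // j ≠ ⟨t, ht⟩} → (Fin n → W), ∑ a, ∑ b,
          F (Base x0 xs r0 r1 a b) := by
    intro F
    rw [Fintype.sum_prod_type]
    refine Finset.sum_congr rfl fun x0 _ => ?_
    rw [Fintype.sum_prod_type]
    refine Finset.sum_congr rfl fun xs _ => ?_
    rw [Fintype.sum_prod_type]
    rw [← Equiv.sum_comp (Equiv.funSplitAt ⟨t, ht⟩ W0).symm
      (fun w0 => ∑ w, F (x0, xs, w0, w)), Fintype.sum_prod_type]
    rw [Finset.sum_comm]
    refine Finset.sum_congr rfl fun r0 _ => ?_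
    calc ∑ a, ∑ w, F (x0, xs, (Equiv.funSplitAt ⟨t, ht⟩ W0).symm (a, r0), w)
        = ∑ a, ∑ b, ∑ r1 : {j : Fin T // j ≠ ⟨t, ht⟩} → (Fin n → W),
            F (Base x0 xs r0 r1 a b) := by
          refine Finset.sum_congr rfl fun a _ => ?_
          rw [← Equiv.sum_comp (Equiv.funSplitAt ⟨t, ht⟩ (Fin n → W)).symm
            (fun w => F (x0, xs, (Equiv.funSplitAt ⟨t, ht⟩ W0).symm (a, r0), w)),
            Fintype.sum_prod_type]
      _ = ∑ a, ∑ r1, ∑ b, F (Base x0 xs r0 r1 a b) :=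
          Finset.sum_congr rfl fun a _ => Finset.sum_comm
      _ = ∑ r1, ∑ a, ∑ b, F (Base x0 xs r0 r1 a b) := Finset.sum_comm
  -- mass factorization
  set M : X0 → (Fin n → X) → ({j : Fin T // j ≠ ⟨t, ht⟩} → W0) →
      ({j : Fin T // j ≠ ⟨t, ht⟩} → (Fin n → W)) → ℝ≥0∞ := fun x0 xs r0 r1 =>
    ρ0 x0 * (∏ i, ρ (xs i)) * (∏ j : {j : Fin T // j ≠ ⟨t, ht⟩}, ν0 (r0 j)) *
      (∏ j : {j : Fin T // j ≠ ⟨t, ht⟩}, ∏ i, ν (r1 j i)) with hM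
  have hmassB : ∀ x0 xs r0 r1 a b,
      mass (Base x0 xs r0 r1 a b) = M x0 xs r0 r1 * (ν0 a * ∏ i, ν (b i)) := by
    intro x0 xs r0 r1 a b
    rw [hmass]
    have p1 : (∏ j, ν0 ((Base x0 xs r0 r1 a b).2.2.1 j))
        = ν0 a * ∏ j : {j : Fin T // j ≠ ⟨t, ht⟩}, ν0 (r0 j) := by
      rw [prod_split ⟨t, ht⟩ (fun j => ν0 ((Base x0 xs r0 r1 a b).2.2.1 j)), hBase1]
      congr 1
      exact Finset.prod_congr rfl fun j _ => by rw [hBase1']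
    have p2 : (∏ j, ∏ i, ν ((Base x0 xs r0 r1 a b).2.2.2 j i))
        = (∏ i, ν (b i)) * ∏ j : {j : Fin T // j ≠ ⟨t, ht⟩}, ∏ i, ν (r1 j i) := by
      rw [prod_split ⟨t, ht⟩ (fun j => ∏ i, ν ((Base x0 xs r0 r1 a b).2.2.2 j i)), hBase2]
      congr 1
      exact Finset.prod_congr rfl fun j _ => by rw [hBase2']
    have e1 : (Base x0 xs r0 r1 a b).1 = x0 := rfl
    have e2 : (Base x0 xs r0 r1 a b).2.1 = xs := rfl
    rw [e1, e2, p1, p2, hM]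
    ring
  -- locality of the state process in the noises
  have hagree : ∀ x0 xs r0 r1 a b a' b', ∀ s ≤ t,
      mmState f0 f ψ0 ψ (Base x0 xs r0 r1 a b) s
        = mmState f0 f ψ0 ψ (Base x0 xs r0 r1 a' b') s := by
    intro x0 xs r0 r1 a b a' b'
    refine mmState_congr f0 f ψ0 ψ rfl rfl ?_ ?_
    · intro j hj
      have hjτ : j ≠ (⟨t, ht⟩ : Fin T) := by
        intro hcon
        rw [hcon] at hj
        simp at hj
      rw [show j = ((⟨j, hjτ⟩ : {j : Fin T // j ≠ ⟨t, ht⟩}) : Fin T) from rfl,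
        hBase1', hBase1']
    · intro j hj
      have hjτ : j ≠ (⟨t, ht⟩ : Fin T) := by
        intro hcon
        rw [hcon] at hj
        simp at hj
      rw [show j = ((⟨j, hjτ⟩ : {j : Fin T // j ≠ ⟨t, ht⟩}) : Fin T) from rfl,
        hBase2', hBase2']
  have hSb : (∑ b : Fin n → W, ∏ i, ν (b i)) = 1 := by
    rw [← Fintype.piFinset_univ, ← Finset.prod_univ_sum]
    simp [hν]
  -- the per-cell computation
  have cell : ∀ x0 xs r0 r1,
      (∑ a, ∑ b, if Base x0 xs r0 r1 a b ∈ S ∩ C then mass (Base x0 xs r0 r1 a b) else 0)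
      = (∑ a, ∑ b, if Base x0 xs r0 r1 a b ∈ S then mass (Base x0 xs r0 r1 a b) else 0)
          * K := by
    intro x0 xs r0 r1
    obtain ⟨ω0, hω0def⟩ : ∃ ω0, ω0 = Base x0 xs r0 r1 default default := ⟨_, rfl⟩
    have hmem : ∀ a b, Base x0 xs r0 r1 a b ∈ S ↔ ω0 ∈ S := fun a b => by
      rw [hω0def]; exact hS _ _ (hagree x0 xs r0 r1 a b default default)
    have hagree0 : ∀ a b, ∀ s ≤ t,
        mmState f0 f ψ0 ψ (Base x0 xs r0 r1 a b) s = mmState f0 f ψ0 ψ ω0 s :=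
      fun a b s hs => by rw [hω0def]; exact hagree x0 xs r0 r1 a b default default s hs
    by_cases hω0 : ω0 ∈ S
    · obtain ⟨hz, hx0, hγ, hu0⟩ := hSval _ hω0
      have hCmem : ∀ a b, (Base x0 xs r0 r1 a b ∈ C) ↔
          (emp (fun i => f z x0c ((mmState f0 f ψ0 ψ ω0 t).2 i)
              (γc ((mmState f0 f ψ0 ψ ω0 t).2 i)) (b i)) = znext
            ∧ f0 z x0c u0c a = x0next) := by
        intro a b
        rw [hC]
        have hstate : mmState f0 f ψ0 ψ (Base x0 xs r0 r1 a b) t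
            = mmState f0 f ψ0 ψ ω0 t := hagree0 a b t le_rfl
        have hhist1 : (fun r : Fin (t + 1) =>
              emp (mmState f0 f ψ0 ψ (Base x0 xs r0 r1 a b) (r : ℕ)).2)
            = fun r : Fin (t + 1) => emp (mmState f0 f ψ0 ψ ω0 (r : ℕ)).2 := by
          funext r
          rw [hagree0 a b (r : ℕ) (Nat.lt_succ_iff.mp r.isLt)]
        have hhist2 : (fun r : Fin (t + 1) =>
              (mmState f0 f ψ0 ψ (Base x0 xs r0 r1 a b) (r : ℕ)).1)
            = fun r : Fin (t + 1) => (mmState f0 f ψ0 ψ ω0 (r : ℕ)).1 := by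
          funext r
          rw [hagree0 a b (r : ℕ) (Nat.lt_succ_iff.mp r.isLt)]
        rw [mmState_succ f0 f ψ0 ψ _ ht]
        simp only [hstate, hhist1, hhist2, hz, hx0, hγ, hu0]
        simp [hBase1, hBase2]
      have expand : ∀ a b,
          (if Base x0 xs r0 r1 a b ∈ S ∩ C then mass (Base x0 xs r0 r1 a b) else 0)
          = M x0 xs r0 r1 * ((if f0 z x0c u0c a = x0next then ν0 a else 0) *
              (if emp (fun i => f z x0c ((mmState f0 f ψ0 ψ ω0 t).2 i)
                  (γc ((mmState f0 f ψ0 ψ ω0 t).2 i)) (b i)) = znext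
                then ∏ i, ν (b i) else 0)) := by
        intro a b
        have hiff : (Base x0 xs r0 r1 a b ∈ S ∩ C) ↔
            (emp (fun i => f z x0c ((mmState f0 f ψ0 ψ ω0 t).2 i)
                (γc ((mmState f0 f ψ0 ψ ω0 t).2 i)) (b i)) = znext
              ∧ f0 z x0c u0c a = x0next) := by
          rw [Finset.mem_inter]
          constructor
          · rintro ⟨_, hc'⟩
            exact (hCmem a b).mp hc'
          · intro hcond
            exact ⟨(hmem a b).mpr hω0, (hCmem a b).mpr hcond⟩
        by_cases h1 : f0 z x0c u0c a = x0next <;>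
          by_cases h2 : emp (fun i => f z x0c ((mmState f0 f ψ0 ψ ω0 t).2 i)
              (γc ((mmState f0 f ψ0 ψ ω0 t).2 i)) (b i)) = znext
        · rw [if_pos (hiff.mpr ⟨h2, h1⟩), if_pos h1, if_pos h2, hmassB]
        · rw [if_neg (fun hcon => h2 (hiff.mp hcon).1), if_neg h2]
          simp
        · rw [if_neg (fun hcon => h1 (hiff.mp hcon).2), if_neg h1]
          simp
        · rw [if_neg (fun hcon => h1 (hiff.mp hcon).2), if_neg h1]
          simp
      have expand2 : ∀ a b,
          (if Base x0 xs r0 r1 a b ∈ S then mass (Base x0 xs r0 r1 a b) else 0)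
          = M x0 xs r0 r1 * (ν0 a * ∏ i, ν (b i)) := by
        intro a b
        rw [if_pos ((hmem a b).mpr hω0), hmassB]
      simp only [expand, expand2]
      simp_rw [← Finset.mul_sum, ← Finset.sum_mul]
      have hexch := sum_emp_invariant hn ν (fun x w => f z x0c x (γc x) w) znext
        (show emp (mmState f0 f ψ0 ψ ω0 t).2 = emp xr by rw [hz, hxr])
      rw [hexch, hν0, hSb, hK]
      ring
    · have h1 : ∀ a b,
          (if Base x0 xs r0 r1 a b ∈ S ∩ C then mass (Base x0 xs r0 r1 a b) else 0) = 0 := by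
        intro a b
        rw [if_neg]
        intro hcon
        exact hω0 ((hmem a b).mp (Finset.mem_inter.mp hcon).1)
      have h2 : ∀ a b,
          (if Base x0 xs r0 r1 a b ∈ S then mass (Base x0 xs r0 r1 a b) else 0) = 0 := by
        intro a b
        rw [if_neg]
        intro hcon
        exact hω0 ((hmem a b).mp hcon)
      simp only [h1, h2]
      simp
  -- put everything together
  calc ∑ ω ∈ S ∩ C, mass ω
      = ∑ ω, (if ω ∈ S ∩ C then mass ω else 0) := by
        rw [Finset.sum_ite_mem, Finset.univ_inter]
    _ = ∑ x0, ∑ xs, ∑ r0, ∑ r1, ∑ a, ∑ b,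
          (if Base x0 xs r0 r1 a b ∈ S ∩ C then mass (Base x0 xs r0 r1 a b) else 0) :=
        reindex _
    _ = ∑ x0, ∑ xs, ∑ r0, ∑ r1, (∑ a, ∑ b,
          (if Base x0 xs r0 r1 a b ∈ S then mass (Base x0 xs r0 r1 a b) else 0)) * K := by
        refine Finset.sum_congr rfl fun x0 _ => Finset.sum_congr rfl fun xs _ =>
          Finset.sum_congr rfl fun r0 _ => Finset.sum_congr rfl fun r1 _ => ?_
        exact cell x0 xs r0 r1
    _ = (∑ x0, ∑ xs, ∑ r0, ∑ r1, ∑ a, ∑ b,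
          (if Base x0 xs r0 r1 a b ∈ S then mass (Base x0 xs r0 r1 a b) else 0)) * K := by
        simp_rw [← Finset.sum_mul]
    _ = (∑ ω, (if ω ∈ S then mass ω else 0)) * K := by
        rw [← reindex (fun ω => if ω ∈ S then mass ω else 0)]
    _ = (∑ ω ∈ S, mass ω) * K := by
        rw [Finset.sum_ite_mem, Finset.univ_inter]

end MMAux

/-- In the major-minor mean-field model, the pair `(Z_t, X⁰_t)` is a controlled Markov
process with controls `(γ_t, U⁰_t)`:
`P(Z_{t+1} = z, X⁰_{t+1} = x⁰ | Z_{0:t}, X⁰_{0:t}, γ_{0:t}, U⁰_{0:t})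
  = P(Z_{t+1} = z, X⁰_{t+1} = x⁰ | Z_t, X⁰_t, γ_t, U⁰_t)`.
Probabilities of events are sums of the product-form masses (minor noises i.i.d. across
subsystems and independent of the major noise); conditional probabilities are ratios. -/
theorem major_minor_is_controlled_markov
    [Fintype X] [DecidableEq X] [Fintype X0] [DecidableEq X0]
    [Fintype U] [DecidableEq U] [Fintype U0] [DecidableEq U0]
    [Fintype W] [DecidableEq W] [Inhabited W]
    [Fintype W0] [DecidableEq W0] [Inhabited W0] {n T : ℕ} (hn : 1 ≤ n)
    (f0 : (X → ℝ) → X0 → U0 → W0 → X0)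
    (f : (X → ℝ) → X0 → X → U → W → X)
    (ψ0 : (t : ℕ) → (Fin (t + 1) → (X → ℝ)) → (Fin (t + 1) → X0) → U0)
    (ψ : (t : ℕ) → (Fin (t + 1) → (X → ℝ)) → (Fin (t + 1) → X0) → X → U)
    (ρ0 : X0 → ℝ≥0∞) (ρ : X → ℝ≥0∞) (ν0 : W0 → ℝ≥0∞) (ν : W → ℝ≥0∞)
    (hρ0 : ∑ x : X0, ρ0 x = 1) (hρ : ∑ x : X, ρ x = 1)
    (hν0 : ∑ w : W0, ν0 w = 1) (hν : ∑ w : W, ν w = 1)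
    (mass : (X0 × (Fin n → X) × (Fin T → W0) × (Fin T → Fin n → W)) → ℝ≥0∞)
    (hmass : ∀ ω, mass ω = ρ0 ω.1 * (∏ i, ρ (ω.2.1 i)) *
      (∏ t, ν0 (ω.2.2.1 t)) * ∏ t, ∏ i, ν (ω.2.2.2 t i))
    (t : ℕ) (ht : t < T)
    (zs : Fin (t + 1) → (X → ℝ)) (x0s : Fin (t + 1) → X0)
    (γs : Fin (t + 1) → (X → U)) (u0s : Fin (t + 1) → U0)
    (znext : X → ℝ) (x0next : X0)
    (A B C : Finset (X0 × (Fin n → X) × (Fin T → W0) × (Fin T → Fin n → W)))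
    (hA : ∀ ω, ω ∈ A ↔
      (∀ s : Fin (t + 1), emp (mmState f0 f ψ0 ψ ω (s : ℕ)).2 = zs s) ∧
      (∀ s : Fin (t + 1), (mmState f0 f ψ0 ψ ω (s : ℕ)).1 = x0s s) ∧
      (∀ s : Fin (t + 1),
        ψ (s : ℕ) (fun r : Fin ((s : ℕ) + 1) => emp (mmState f0 f ψ0 ψ ω (r : ℕ)).2)
          (fun r : Fin ((s : ℕ) + 1) => (mmState f0 f ψ0 ψ ω (r : ℕ)).1) = γs s) ∧
      (∀ s : Fin (t + 1),
        ψ0 (s : ℕ) (fun r : Fin ((s : ℕ) + 1) => emp (mmState f0 f ψ0 ψ ω (r : ℕ)).2)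
          (fun r : Fin ((s : ℕ) + 1) => (mmState f0 f ψ0 ψ ω (r : ℕ)).1) = u0s s))
    (hB : ∀ ω, ω ∈ B ↔
      emp (mmState f0 f ψ0 ψ ω t).2 = zs (Fin.last t) ∧
      (mmState f0 f ψ0 ψ ω t).1 = x0s (Fin.last t) ∧
      ψ t (fun r : Fin (t + 1) => emp (mmState f0 f ψ0 ψ ω (r : ℕ)).2)
        (fun r : Fin (t + 1) => (mmState f0 f ψ0 ψ ω (r : ℕ)).1) = γs (Fin.last t) ∧
      ψ0 t (fun r : Fin (t + 1) => emp (mmState f0 f ψ0 ψ ω (r : ℕ)).2)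
        (fun r : Fin (t + 1) => (mmState f0 f ψ0 ψ ω (r : ℕ)).1) = u0s (Fin.last t))
    (hC : ∀ ω, ω ∈ C ↔
      emp (mmState f0 f ψ0 ψ ω (t + 1)).2 = znext ∧
      (mmState f0 f ψ0 ψ ω (t + 1)).1 = x0next)
    (hApos : ∑ ω ∈ A, mass ω ≠ 0) (hBpos : ∑ ω ∈ B, mass ω ≠ 0) :
    (∑ ω ∈ A ∩ C, mass ω) / (∑ ω ∈ A, mass ω) =
      (∑ ω ∈ B ∩ C, mass ω) / (∑ ω ∈ B, mass ω) := by
  classical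
  -- locality of the membership conditions
  have hAdir : ∀ ω ω', (∀ s ≤ t, mmState f0 f ψ0 ψ ω s = mmState f0 f ψ0 ψ ω' s) →
      ω ∈ A → ω' ∈ A := by
    intro ω ω' h hω
    rw [hA] at hω ⊢
    obtain ⟨h1, h2, h3, h4⟩ := hω
    have hst : ∀ s : Fin (t + 1), mmState f0 f ψ0 ψ ω' (s : ℕ) = mmState f0 f ψ0 ψ ω (s : ℕ) :=
      fun s => (h _ (Nat.lt_succ_iff.mp s.isLt)).symm
    have hh1 : ∀ s : Fin (t + 1),
        (fun r : Fin ((s : ℕ) + 1) => emp (mmState f0 f ψ0 ψ ω' (r : ℕ)).2)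
          = fun r : Fin ((s : ℕ) + 1) => emp (mmState f0 f ψ0 ψ ω (r : ℕ)).2 := by
      intro s
      funext r
      rw [h (r : ℕ) (le_trans (Nat.lt_succ_iff.mp r.isLt) (Nat.lt_succ_iff.mp s.isLt))]
    have hh2 : ∀ s : Fin (t + 1),
        (fun r : Fin ((s : ℕ) + 1) => (mmState f0 f ψ0 ψ ω' (r : ℕ)).1)
          = fun r : Fin ((s : ℕ) + 1) => (mmState f0 f ψ0 ψ ω (r : ℕ)).1 := by
      intro s
      funext r
      rw [h (r : ℕ) (le_trans (Nat.lt_succ_iff.mp r.isLt) (Nat.lt_succ_iff.mp s.isLt))]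
    refine ⟨fun s => ?_, fun s => ?_, fun s => ?_, fun s => ?_⟩
    · rw [hst s]; exact h1 s
    · rw [hst s]; exact h2 s
    · rw [hh1 s, hh2 s]; exact h3 s
    · rw [hh1 s, hh2 s]; exact h4 s
  have hSA : ∀ ω ω', (∀ s ≤ t, mmState f0 f ψ0 ψ ω s = mmState f0 f ψ0 ψ ω' s) →
      (ω ∈ A ↔ ω' ∈ A) :=
    fun ω ω' h => ⟨hAdir ω ω' h, hAdir ω' ω (fun s hs => (h s hs).symm)⟩
  have hBdir : ∀ ω ω', (∀ s ≤ t, mmState f0 f ψ0 ψ ω s = mmState f0 f ψ0 ψ ω' s) →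
      ω ∈ B → ω' ∈ B := by
    intro ω ω' h hω
    rw [hB] at hω ⊢
    obtain ⟨h1, h2, h3, h4⟩ := hω
    have hst : mmState f0 f ψ0 ψ ω' t = mmState f0 f ψ0 ψ ω t := (h t le_rfl).symm
    have hh1 : (fun r : Fin (t + 1) => emp (mmState f0 f ψ0 ψ ω' (r : ℕ)).2)
        = fun r : Fin (t + 1) => emp (mmState f0 f ψ0 ψ ω (r : ℕ)).2 := by
      funext r
      rw [h (r : ℕ) (Nat.lt_succ_iff.mp r.isLt)]
    have hh2 : (fun r : Fin (t + 1) => (mmState f0 f ψ0 ψ ω' (r : ℕ)).1)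
        = fun r : Fin (t + 1) => (mmState f0 f ψ0 ψ ω (r : ℕ)).1 := by
      funext r
      rw [h (r : ℕ) (Nat.lt_succ_iff.mp r.isLt)]
    refine ⟨?_, ?_, ?_, ?_⟩
    · rw [hst]; exact h1
    · rw [hst]; exact h2
    · rw [hh1, hh2]; exact h3
    · rw [hh1, hh2]; exact h4
  have hSB : ∀ ω ω', (∀ s ≤ t, mmState f0 f ψ0 ψ ω s = mmState f0 f ψ0 ψ ω' s) →
      (ω ∈ B ↔ ω' ∈ B) :=
    fun ω ω' h => ⟨hBdir ω ω' h, hBdir ω' ω (fun s hs => (h s hs).symm)⟩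
  -- the fixed values of (Z_t, X⁰_t, γ_t, U⁰_t) on A and on B
  have hvalA : ∀ ω ∈ A, emp (mmState f0 f ψ0 ψ ω t).2 = zs (Fin.last t) ∧
      (mmState f0 f ψ0 ψ ω t).1 = x0s (Fin.last t) ∧
      ψ t (fun r : Fin (t + 1) => emp (mmState f0 f ψ0 ψ ω (r : ℕ)).2)
        (fun r : Fin (t + 1) => (mmState f0 f ψ0 ψ ω (r : ℕ)).1) = γs (Fin.last t) ∧
      ψ0 t (fun r : Fin (t + 1) => emp (mmState f0 f ψ0 ψ ω (r : ℕ)).2)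
        (fun r : Fin (t + 1) => (mmState f0 f ψ0 ψ ω (r : ℕ)).1) = u0s (Fin.last t) := by
    intro ω hω
    rw [hA] at hω
    obtain ⟨h1, h2, h3, h4⟩ := hω
    exact ⟨h1 (Fin.last t), h2 (Fin.last t), h3 (Fin.last t), h4 (Fin.last t)⟩
  have hvalB : ∀ ω ∈ B, emp (mmState f0 f ψ0 ψ ω t).2 = zs (Fin.last t) ∧
      (mmState f0 f ψ0 ψ ω t).1 = x0s (Fin.last t) ∧
      ψ t (fun r : Fin (t + 1) => emp (mmState f0 f ψ0 ψ ω (r : ℕ)).2)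
        (fun r : Fin (t + 1) => (mmState f0 f ψ0 ψ ω (r : ℕ)).1) = γs (Fin.last t) ∧
      ψ0 t (fun r : Fin (t + 1) => emp (mmState f0 f ψ0 ψ ω (r : ℕ)).2)
        (fun r : Fin (t + 1) => (mmState f0 f ψ0 ψ ω (r : ℕ)).1) = u0s (Fin.last t) := by
    intro ω hω
    rw [hB] at hω
    exact hω
  -- a reference minor-state tuple with empirical distribution `zs (Fin.last t)`
  have hAne : A.Nonempty := by
    rw [Finset.nonempty_iff_ne_empty]
    intro hcon
    rw [hcon] at hApos
    simp at hApos
  obtain ⟨ωA, hωA⟩ := hAne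
  obtain ⟨hxr, -, -, -⟩ := hvalA ωA hωA
  have hkA := key_sum hn f0 f ψ0 ψ ρ0 ρ ν0 ν hν0 hν mass hmass ht
    (zs (Fin.last t)) (x0s (Fin.last t)) (γs (Fin.last t)) (u0s (Fin.last t)) znext x0next
    A C hSA hvalA hC (mmState f0 f ψ0 ψ ωA t).2 hxr
  have hkB := key_sum hn f0 f ψ0 ψ ρ0 ρ ν0 ν hν0 hν mass hmass ht
    (zs (Fin.last t)) (x0s (Fin.last t)) (γs (Fin.last t)) (u0s (Fin.last t)) znext x0next
    B C hSB hvalB hC (mmState f0 f ψ0 ψ ωA t).2 hxr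
  -- finiteness of the masses
  have hm1 : ∀ ω, mass ω ≤ 1 := by
    intro ω
    rw [hmass]
    have l0 : ρ0 ω.1 ≤ 1 :=
      le_trans (Finset.single_le_sum (fun i _ => (zero_le : 0 ≤ ρ0 i)) (Finset.mem_univ ω.1))
        (le_of_eq hρ0)
    have l1 : (∏ i, ρ (ω.2.1 i)) ≤ 1 :=
      Finset.prod_le_one' fun i _ =>
        le_trans (Finset.single_le_sum (fun j _ => (zero_le : 0 ≤ ρ j)) (Finset.mem_univ (ω.2.1 i)))
          (le_of_eq hρ)
    have l2 : (∏ s, ν0 (ω.2.2.1 s)) ≤ 1 :=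
      Finset.prod_le_one' fun s _ =>
        le_trans (Finset.single_le_sum (fun j _ => (zero_le : 0 ≤ ν0 j)) (Finset.mem_univ (ω.2.2.1 s)))
          (le_of_eq hν0)
    have l3 : (∏ s, ∏ i, ν (ω.2.2.2 s i)) ≤ 1 :=
      Finset.prod_le_one' fun s _ => Finset.prod_le_one' fun i _ =>
        le_trans (Finset.single_le_sum (fun j _ => (zero_le : 0 ≤ ν j)) (Finset.mem_univ (ω.2.2.2 s i)))
          (le_of_eq hν)
    exact mul_le_one' (mul_le_one' (mul_le_one' l0 l1) l2) l3
  have hAtop : (∑ ω ∈ A, mass ω) ≠ ⊤ :=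
    (ENNReal.sum_lt_top.mpr fun ω _ => lt_of_le_of_lt (hm1 ω) ENNReal.one_lt_top).ne
  have hBtop : (∑ ω ∈ B, mass ω) ≠ ⊤ :=
    (ENNReal.sum_lt_top.mpr fun ω _ => lt_of_le_of_lt (hm1 ω) ENNReal.one_lt_top).ne
  have cancel : ∀ s k : ℝ≥0∞, s ≠ 0 → s ≠ ⊤ → s * k / s = k := by
    intro s k h0 htop
    rw [mul_comm, mul_div_assoc, ENNReal.div_self h0 htop, mul_one]
  rw [hkA, hkB, cancel _ _ hApos hAtop, cancel _ _ hBpos hBtop]
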